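/- arXiv:1203.2790 — 2 statements merged into one kernel-verified Lean document; each statement's English description precedes it below -/
import Mathlib

section
/- Under the linearity condition, the projection identity E(ψᵀX | ηᵀX) = ψᵀ P_η(Σ)ᵀ X holds, where P_η(Σ) = η(ηᵀΣη)⁻¹ηᵀΣ is the projection onto span(η) with respect to the Σ inner product. In particular, P_η(Σ) is idempotent: P_η(Σ)² = P_η(Σ). -/
open MeasureTheory Matrix
open scoped ENNReal

section Aux

variable {Ω : Type*} [mΩ : MeasurableSpace Ω] {μ : Measure Ω}

theorem aux_integrable_mul {f g : Ω → ℝ} (hf : MemLp f 2 μ) (hg : MemLp g 2 μ) :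
    Integrable (fun ω => f ω * g ω) μ := by
  rw [← memLp_one_iff_integrable]
  have h : (1 : ℝ≥0∞) / 1 = 1 / 2 + 1 / 2 := by
    rw [ENNReal.div_add_div_same, ENNReal.div_self one_ne_zero ENNReal.one_ne_top,
      one_add_one_eq_two, ENNReal.div_self (by norm_num) ENNReal.ofNat_ne_top]
  exact hg.smul (r := 1) hf

end Aux

/-- Under the linearity condition (with `E X = 0`), the projection identity
`E(ψᵀX | ηᵀX) = ψᵀ P_η(Σ)ᵀ X` holds with `P_η(Σ) = η(ηᵀΣη)⁻¹ηᵀΣ`, and `P_η(Σ)` is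
idempotent. -/
theorem projection_identity {p d : ℕ} {Ω : Type*} [mΩ : MeasurableSpace Ω]
    (μ : Measure Ω) [IsProbabilityMeasure μ]
    (X : Ω → Fin p → ℝ) (hX : Measurable X)
    (S : Matrix (Fin p) (Fin p) ℝ)
    (hScov : ∀ i j, S i j = ∫ ω, X ω i * X ω j ∂μ)
    (hmean : ∀ i, ∫ ω, X ω i ∂μ = 0)
    (hSpd : S.PosDef)
    (η : Matrix (Fin p) (Fin d) ℝ) (hrank : η.rank = d)
    (hinv : IsUnit (η.transpose * S * η).det)
    (G : MeasurableSpace Ω)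
    (hG : G = MeasurableSpace.comap (fun ω => η.transpose.mulVec (X ω)) inferInstance)
    (hGle : G ≤ mΩ)
    (hlin : ∃ (A : Matrix (Fin p) (Fin d) ℝ) (b : Fin p → ℝ),
      μ[X | G] =ᵐ[μ] fun ω => A.mulVec (η.transpose.mulVec (X ω)) + b)
    (P : Matrix (Fin p) (Fin p) ℝ)
    (hP : P = η * (η.transpose * S * η)⁻¹ * η.transpose * S) :
    (∀ ψ : Fin p → ℝ,
      μ[(fun ω => ψ ⬝ᵥ X ω) | G] =ᵐ[μ] fun ω => ψ ⬝ᵥ P.transpose.mulVec (X ω)) ∧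
    P * P = P := by
  subst hP
  letI : MeasurableSpace Ω := mΩ
  obtain ⟨A, b, hlin⟩ := hlin
  set F : Ω → Fin d → ℝ := fun ω => η.transpose.mulVec (X ω) with hF
  -- basic measurability
  have hXi : ∀ i, Measurable fun ω => X ω i := fun i => (measurable_pi_apply i).comp hX
  -- diagonal of S positive
  have hSdiag : ∀ i, 0 < S i i := by
    intro i
    have hne : (Pi.single i 1 : Fin p → ℝ) ≠ 0 := by
      intro h; simpa using congrFun h i
    have := hSpd.dotProduct_mulVec_pos hne
    simpa [dotProduct, Matrix.mulVec, Pi.single_apply, Finset.sum_ite_eq, mul_ite] using this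
  -- L² membership
  have hL2 : ∀ i, MemLp (fun ω => X ω i) 2 μ := by
    intro i
    rw [memLp_two_iff_integrable_sq (hXi i).aestronglyMeasurable]
    by_contra h
    have h1 := hScov i i
    have h2 : (∫ ω, X ω i * X ω i ∂μ) = ∫ ω, (X ω i) ^ 2 ∂μ := by
      congr 1; funext ω; ring
    rw [h2, integral_undef h] at h1
    exact absurd h1 (ne_of_gt (hSdiag i))
  have hint : ∀ i, Integrable (fun ω => X ω i) μ := fun i => (hL2 i).integrable one_le_two
  -- X integrable as a vector-valued function
  have hXint : Integrable X μ := by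
    have hg : Integrable (fun ω => ∑ i, |X ω i|) μ :=
      integrable_finset_sum _ fun i _ => (hint i).abs
    refine hg.mono' hX.aestronglyMeasurable (Filter.Eventually.of_forall fun ω => ?_)
    rw [pi_norm_le_iff_of_nonneg (by positivity)]
    intro i
    rw [Real.norm_eq_abs]
    exact Finset.single_le_sum (f := fun j => |X ω j|) (fun j _ => abs_nonneg _)
      (Finset.mem_univ i)
  -- F is G-measurable
  have hFmeasG : Measurable[G] F := by
    rw [hG]; exact Measurable.of_comap_le le_rfl
  have hYsm : ∀ k, StronglyMeasurable[G] fun ω => F ω k := fun k =>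
    ((measurable_pi_apply k).comp hFmeasG).stronglyMeasurable
  have hYL2 : ∀ k, MemLp (fun ω => F ω k) 2 μ := by
    intro k
    have he : (fun ω => F ω k) = fun ω => ∑ l, η l k * X ω l := by
      funext ω; simp [hF, Matrix.mulVec, dotProduct, Matrix.transpose_apply]
    rw [he]
    exact memLp_finset_sum _ fun l _ => (hL2 l).const_mul _
  have hYint : ∀ k, Integrable (fun ω => F ω k) μ := fun k => (hYL2 k).integrable one_le_two
  have hYexp : ∀ k, (fun ω => F ω k) = fun ω => ∑ l, η l k * X ω l := by
    intro k; funext ω; simp [hF, Matrix.mulVec, dotProduct, Matrix.transpose_apply]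
  have hYmean : ∀ k, ∫ ω, F ω k ∂μ = 0 := by
    intro k
    rw [hYexp k, integral_finset_sum _ fun l _ => (hint l).const_mul _]
    simp [integral_const_mul, hmean]
  have hYX : ∀ k i, ∫ ω, F ω k * X ω i ∂μ = (η.transpose * S) k i := by
    intro k i
    have he : (fun ω => F ω k * X ω i) = fun ω => ∑ l, η l k * (X ω l * X ω i) := by
      funext ω
      rw [show F ω k = ∑ l, η l k * X ω l from congrFun (hYexp k) ω]
      rw [Finset.sum_mul]
      exact Finset.sum_congr rfl fun l _ => by ring
    rw [he, integral_finset_sum _ fun l _ =>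
      (aux_integrable_mul (hL2 l) (hL2 i)).const_mul _]
    simp only [integral_const_mul]
    rw [Matrix.mul_apply]
    exact Finset.sum_congr rfl fun l _ => by rw [Matrix.transpose_apply, hScov]
  have hYY : ∀ k j, ∫ ω, F ω k * F ω j ∂μ = (η.transpose * S * η) k j := by
    intro k j
    have he : (fun ω => F ω k * F ω j) = fun ω => ∑ l, F ω k * X ω l * η l j := by
      funext ω
      conv_lhs => rw [show F ω j = ∑ l, η l j * X ω l from congrFun (hYexp j) ω]
      rw [Finset.mul_sum]
      exact Finset.sum_congr rfl fun l _ => by ring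
    rw [he, integral_finset_sum _ fun l _ =>
      (aux_integrable_mul (hYL2 k) (hL2 l)).mul_const _]
    simp only [integral_mul_const]
    rw [Matrix.mul_apply]
    exact Finset.sum_congr rfl fun l _ => by rw [hYX]
  haveI : SigmaFinite (μ.trim hGle) := by infer_instance
  -- conditional expectation commutes with coordinates
  have hcomp : ∀ i, (fun ω => (μ[X|G]) ω i) =ᵐ[μ] μ[fun ω => X ω i|G] := by
    intro i
    refine ae_eq_condExp_of_forall_setIntegral_eq hGle (hint i)
      (fun s _ _ => ?_) (fun s hs _ => ?_) ?_
    · exact ((ContinuousLinearMap.proj (R := ℝ) (φ := fun _ : Fin p => ℝ) i).integrable_comp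
        integrable_condExp).integrableOn
    · have h1 := setIntegral_condExp hGle hXint hs
      have h2 := (ContinuousLinearMap.proj (R := ℝ) (φ := fun _ : Fin p => ℝ) i).integral_comp_comm
        (integrable_condExp (f := X) (m := G)).integrableOn (μ := μ.restrict s)
      have h3 := (ContinuousLinearMap.proj (R := ℝ) (φ := fun _ : Fin p => ℝ) i).integral_comp_comm
        hXint.integrableOn (μ := μ.restrict s)
      simp only [ContinuousLinearMap.proj_apply] at h2 h3
      rw [h2, h3, h1]
    · exact ((continuous_apply i).comp_stronglyMeasurable
        (stronglyMeasurable_condExp (m := G) (f := X) (μ := μ))).aestronglyMeasurable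
  -- coordinates of the linearity hypothesis
  have hlin_i : ∀ i, μ[fun ω => X ω i|G] =ᵐ[μ] fun ω => A.mulVec (F ω) i + b i := by
    intro i
    refine (hcomp i).symm.trans ?_
    filter_upwards [hlin] with ω hω
    rw [hω]; rfl
  -- b = 0
  have hb : ∀ i, b i = 0 := by
    intro i
    have h1 : ∫ ω, (μ[fun ω => X ω i|G]) ω ∂μ = 0 := by
      rw [integral_condExp hGle]; exact hmean i
    have hA : (fun ω => A.mulVec (F ω) i + b i)
        = fun ω => (∑ j, A i j * F ω j) + b i := by
      funext ω; simp [Matrix.mulVec, dotProduct]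
    have h2 : ∫ ω, (A.mulVec (F ω) i + b i) ∂μ = b i := by
      rw [hA, integral_add (integrable_finset_sum _ fun j _ => (hYint j).const_mul _)
        (integrable_const _),
        integral_finset_sum _ fun j _ => (hYint j).const_mul _]
      simp [integral_const_mul, hYmean]
    rw [integral_congr_ae (hlin_i i), h2] at h1
    exact h1
  -- covariance identity via pull-out property
  have hpull : ∀ k i, ∫ ω, F ω k * X ω i ∂μ = ∑ j, A i j * (η.transpose * S * η) k j := by
    intro k i
    have hfg : Integrable (fun ω => F ω k * X ω i) μ := aux_integrable_mul (hYL2 k) (hL2 i)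
    have h1 : μ[(fun ω => F ω k) * (fun ω => X ω i)|G]
        =ᵐ[μ] (fun ω => F ω k) * μ[fun ω => X ω i|G] :=
      condExp_mul_of_stronglyMeasurable_left (hYsm k) hfg (hint i)
    have h2 : ∫ ω, F ω k * X ω i ∂μ = ∫ ω, F ω k * (μ[fun ω => X ω i|G]) ω ∂μ := by
      rw [← integral_condExp hGle (f := fun ω => F ω k * X ω i)]
      exact integral_congr_ae h1
    have h3 : ∫ ω, F ω k * (μ[fun ω => X ω i|G]) ω ∂μ
        = ∫ ω, F ω k * (A.mulVec (F ω) i + b i) ∂μ :=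
      integral_congr_ae (by filter_upwards [hlin_i i] with ω hω; rw [hω])
    have he : (fun ω => F ω k * (A.mulVec (F ω) i + b i))
        = fun ω => (∑ j, A i j * (F ω k * F ω j)) + b i * F ω k := by
      funext ω
      rw [show A.mulVec (F ω) i = ∑ j, A i j * F ω j from by simp [Matrix.mulVec, dotProduct],
        mul_add, Finset.mul_sum, mul_comm (F ω k) (b i)]
      congr 1
      exact Finset.sum_congr rfl fun j _ => by ring
    rw [h2, h3, he, integral_add
      (integrable_finset_sum _ fun j _ => (aux_integrable_mul (hYL2 k) (hYL2 j)).const_mul _)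
      ((hYint k).const_mul _),
      integral_finset_sum _ fun j _ => (aux_integrable_mul (hYL2 k) (hYL2 j)).const_mul _]
    simp [integral_const_mul, hYY, hb, hYmean]
  -- matrix identity: ηᵀS = (ηᵀSη) Aᵀ
  have hmatrix : η.transpose * S = (η.transpose * S * η) * A.transpose := by
    ext k i
    rw [← hYX k i, hpull k i]
    conv_rhs => rw [Matrix.mul_apply]
    exact Finset.sum_congr rfl fun j _ => by rw [Matrix.transpose_apply]; ring
  have hAT : A.transpose = (η.transpose * S * η)⁻¹ * (η.transpose * S) := by
    calc A.transpose = ((η.transpose * S * η)⁻¹ * (η.transpose * S * η)) * A.transpose := by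
          rw [Matrix.nonsing_inv_mul _ hinv, Matrix.one_mul]
      _ = (η.transpose * S * η)⁻¹ * (η.transpose * S * η * A.transpose) := by
          rw [Matrix.mul_assoc]
      _ = (η.transpose * S * η)⁻¹ * (η.transpose * S) := by rw [← hmatrix]
  have hPT : (η * (η.transpose * S * η)⁻¹ * η.transpose * S).transpose = A * η.transpose := by
    have h : η * (η.transpose * S * η)⁻¹ * η.transpose * S = η * A.transpose := by
      rw [hAT]
      simp only [Matrix.mul_assoc]
    rw [h, Matrix.transpose_mul, Matrix.transpose_transpose]
  -- final identity for the coordinates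
  have hfinal_i : ∀ i, μ[fun ω => X ω i|G]
      =ᵐ[μ] fun ω => (η * (η.transpose * S * η)⁻¹ * η.transpose * S).transpose.mulVec (X ω) i := by
    intro i
    refine (hlin_i i).trans (Filter.Eventually.of_forall fun ω => ?_)
    simp only [hb, add_zero, hPT, ← Matrix.mulVec_mulVec, hF]
  constructor
  · intro ψ
    have e1 : (fun ω => ψ ⬝ᵥ X ω) = ∑ i : Fin p, fun ω => ψ i * X ω i := by
      funext ω; simp [dotProduct, Finset.sum_apply]
    rw [e1]
    refine (condExp_finset_sum (fun i _ => (hint i).const_mul _) G).trans ?_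
    have hsm : ∀ i : Fin p, μ[fun ω => ψ i * X ω i|G]
        =ᵐ[μ] fun ω => ψ i * (μ[fun ω => X ω i|G]) ω := by
      intro i
      have := condExp_smul (μ := μ) (m := G) (ψ i) (fun ω => X ω i)
      exact this
    have hallsm : ∀ᵐ ω ∂μ, ∀ i : Fin p, (μ[fun ω => ψ i * X ω i|G]) ω
        = ψ i * (η * (η.transpose * S * η)⁻¹ * η.transpose * S).transpose.mulVec (X ω) i := by
      rw [ae_all_iff]
      intro i
      filter_upwards [hsm i, hfinal_i i] with ω h1 h2
      rw [h1, h2]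
    filter_upwards [hallsm] with ω hω
    rw [Finset.sum_apply, Finset.sum_congr rfl fun i _ => hω i]
    simp [dotProduct]
  · have key : (η.transpose * S * η) * ((η.transpose * S * η)⁻¹ * (η.transpose * S))
        = η.transpose * S := by
      rw [← Matrix.mul_assoc, Matrix.mul_nonsing_inv _ hinv, Matrix.one_mul]
    calc η * (η.transpose * S * η)⁻¹ * η.transpose * S
          * (η * (η.transpose * S * η)⁻¹ * η.transpose * S)
        = η * ((η.transpose * S * η)⁻¹
            * ((η.transpose * S * η) * ((η.transpose * S * η)⁻¹ * (η.transpose * S)))) := by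
          simp only [Matrix.mul_assoc]
      _ = η * ((η.transpose * S * η)⁻¹ * (η.transpose * S)) := by rw [key]
      _ = η * (η.transpose * S * η)⁻¹ * η.transpose * S := by simp only [Matrix.mul_assoc]
end

section
/- Let Gₙ(k) = Σᵢ₌₁ᵏ λᵢ(M̂ₙ) − c₁(n)c₂(k), where λᵢ(M̂ₙ) are the eigenvalues of M̂ₙ in decreasing order, M̂ₙ → M₀ in probability at rate O_P(n^{−1/2}), rank(M₀) = d, c₁(n) > 0 a.s., c₁(n) → 0 in probability, n^{1/2}c₁(n) → ∞ in probability, and c₂ is strictly increasing. Then the maximizer d̂ of Gₙ(k) over k ∈ {0, …, p} satisfies P(d̂ = d) → 1 as n → ∞. -/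
open MeasureTheory Matrix Filter Finset

open Module Submodule
open scoped RealInnerProductSpace ENNReal

variable {p : ℕ}

/-- The eigenvector basis reordered by a permutation. -/
noncomputable def obasis {M : Matrix (Fin p) (Fin p) ℝ} (hM : M.IsHermitian)
    (σ : Equiv.Perm (Fin p)) : OrthonormalBasis (Fin p) ℝ (EuclideanSpace ℝ (Fin p)) :=
  hM.eigenvectorBasis.reindex σ.symm

lemma obasis_apply {M : Matrix (Fin p) (Fin p) ℝ} (hM : M.IsHermitian)
    (σ : Equiv.Perm (Fin p)) (j : Fin p) :
    obasis hM σ j = hM.eigenvectorBasis (σ j) := by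
  simp [obasis]

lemma toEuclideanLin_obasis {M : Matrix (Fin p) (Fin p) ℝ} (hM : M.IsHermitian)
    (σ : Equiv.Perm (Fin p)) (j : Fin p) :
    Matrix.toEuclideanLin M (obasis hM σ j) = hM.eigenvalues (σ j) • obasis hM σ j := by
  rw [obasis_apply]
  apply (WithLp.equiv 2 (Fin p → ℝ)).injective
  simpa [Matrix.toEuclideanLin_apply] using hM.mulVec_eigenvectorBasis (σ j)

lemma repr_toEuclideanLin {M : Matrix (Fin p) (Fin p) ℝ} (hM : M.IsHermitian)
    (σ : Equiv.Perm (Fin p)) (v : EuclideanSpace ℝ (Fin p)) (j : Fin p) :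
    (obasis hM σ).repr (Matrix.toEuclideanLin M v) j
      = hM.eigenvalues (σ j) * ((obasis hM σ).repr v j) := by
  have hsym : (Matrix.toEuclideanLin M).IsSymmetric := isHermitian_iff_isSymmetric.mp hM
  rw [OrthonormalBasis.repr_apply_apply, OrthonormalBasis.repr_apply_apply,
    ← hsym (obasis hM σ j) v, toEuclideanLin_obasis, inner_smul_left]
  simp

lemma inner_toEuclideanLin_eq_sum {M : Matrix (Fin p) (Fin p) ℝ} (hM : M.IsHermitian)
    (σ : Equiv.Perm (Fin p)) (v : EuclideanSpace ℝ (Fin p)) :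
    ⟪v, Matrix.toEuclideanLin M v⟫
      = ∑ j, hM.eigenvalues (σ j) * ((obasis hM σ).repr v j)^2 := by
  rw [← (obasis hM σ).repr.inner_map_map v (Matrix.toEuclideanLin M v)]
  rw [PiLp.inner_apply]
  refine Finset.sum_congr rfl fun j _ => ?_
  rw [repr_toEuclideanLin hM σ v j]
  simp [RCLike.inner_apply]
  ring

lemma norm_sq_eq_sum_repr (b : OrthonormalBasis (Fin p) ℝ (EuclideanSpace ℝ (Fin p)))
    (v : EuclideanSpace ℝ (Fin p)) :
    ‖v‖^2 = ∑ j, (b.repr v j)^2 := by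
  rw [← real_inner_self_eq_norm_sq, ← b.repr.inner_map_map v v, PiLp.inner_apply]
  refine Finset.sum_congr rfl fun j _ => ?_
  simp [RCLike.inner_apply]

lemma repr_eq_zero_of_mem_span (b : OrthonormalBasis (Fin p) ℝ (EuclideanSpace ℝ (Fin p)))
    (s : Finset (Fin p)) {v : EuclideanSpace ℝ (Fin p)}
    (hv : v ∈ Submodule.span ℝ (b '' ↑s)) {j : Fin p} (hj : j ∉ s) :
    b.repr v j = 0 := by
  induction hv using Submodule.span_induction with
  | mem x hx =>
      obtain ⟨k, hk, rfl⟩ := hx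
      rw [OrthonormalBasis.repr_apply_apply]
      have : j ≠ k := fun h => hj (h ▸ hk)
      simpa using b.orthonormal.2 this
  | zero => simp
  | add x y _ _ hx hy => simp [hx, hy]
  | smul a x _ hx => simp [hx]

lemma finrank_span_obasis (b : OrthonormalBasis (Fin p) ℝ (EuclideanSpace ℝ (Fin p)))
    (s : Finset (Fin p)) :
    finrank ℝ (Submodule.span ℝ (b '' ↑s)) = s.card := by
  have h : LinearIndependent ℝ (fun x : {x // x ∈ s} => b x) :=
    b.orthonormal.linearIndependent.comp ((↑) : {x // x ∈ s} → Fin p) Subtype.val_injective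
  have h2 := finrank_span_eq_card h
  have hr : Set.range (fun x : {x // x ∈ s} => b x) = b '' ↑s := by
    ext y; simp [Set.mem_image]
  rw [hr] at h2
  simpa using h2

lemma exists_ne_zero_mem_inf (U W : Submodule ℝ (EuclideanSpace ℝ (Fin p)))
    (h : p < finrank ℝ U + finrank ℝ W) :
    ∃ v : EuclideanSpace ℝ (Fin p), v ≠ 0 ∧ v ∈ U ∧ v ∈ W := by
  have hs : finrank ℝ (U ⊔ W : Submodule ℝ _) + finrank ℝ (U ⊓ W : Submodule ℝ _)
      = finrank ℝ U + finrank ℝ W := Submodule.finrank_sup_add_finrank_inf_eq U W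
  have hle : finrank ℝ (U ⊔ W : Submodule ℝ _) ≤ p := by
    simpa [finrank_euclideanSpace] using Submodule.finrank_le (U ⊔ W)
  have hpos : 0 < finrank ℝ (U ⊓ W : Submodule ℝ _) := by omega
  have := Module.finrank_pos_iff.mp hpos
  obtain ⟨x, hx⟩ := exists_ne (0 : (U ⊓ W : Submodule ℝ _))
  exact ⟨x, by simpa using Subtype.coe_injective.ne hx,
    x.2.1, x.2.2⟩

section CF
variable {M : Matrix (Fin p) (Fin p) ℝ} (hM : M.IsHermitian) {w : Fin p → ℝ}
  {σ : Equiv.Perm (Fin p)} (hσ : w = hM.eigenvalues ∘ σ) (hw : Antitone w)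

include hσ hw in
/-- On the span of the "top" eigenvectors `j ≤ i`, the quadratic form is ≥ `w i ‖v‖²`. -/
lemma quad_ge_on_top {i : Fin p} {v : EuclideanSpace ℝ (Fin p)}
    (hv : v ∈ Submodule.span ℝ (obasis hM σ '' ↑(Finset.Iic i))) :
    w i * ‖v‖^2 ≤ ⟪v, Matrix.toEuclideanLin M v⟫ := by
  rw [inner_toEuclideanLin_eq_sum hM σ, norm_sq_eq_sum_repr (obasis hM σ), Finset.mul_sum]
  refine Finset.sum_le_sum fun j _ => ?_
  by_cases hj : j ∈ Finset.Iic i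
  · have : hM.eigenvalues (σ i) ≤ hM.eigenvalues (σ j) := by
      have h := hw (Finset.mem_Iic.mp hj); rw [hσ] at h; simpa using h
    have h2 : (0:ℝ) ≤ ((obasis hM σ).repr v j)^2 := sq_nonneg _
    rw [hσ]
    simp only [Function.comp_apply] at this ⊢
    nlinarith
  · rw [repr_eq_zero_of_mem_span _ _ hv hj]; simp

include hσ hw in
/-- On the span of the "bottom" eigenvectors `i ≤ j`, the quadratic form is ≤ `w i ‖v‖²`. -/
lemma quad_le_on_bot {i : Fin p} {v : EuclideanSpace ℝ (Fin p)}
    (hv : v ∈ Submodule.span ℝ (obasis hM σ '' ↑(Finset.Ici i))) :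
    ⟪v, Matrix.toEuclideanLin M v⟫ ≤ w i * ‖v‖^2 := by
  rw [inner_toEuclideanLin_eq_sum hM σ, norm_sq_eq_sum_repr (obasis hM σ), Finset.mul_sum]
  refine Finset.sum_le_sum fun j _ => ?_
  by_cases hj : j ∈ Finset.Ici i
  · have : hM.eigenvalues (σ j) ≤ hM.eigenvalues (σ i) := by
      have h := hw (Finset.mem_Ici.mp hj); rw [hσ] at h; simpa using h
    have h2 : (0:ℝ) ≤ ((obasis hM σ).repr v j)^2 := sq_nonneg _
    rw [hσ]
    simp only [Function.comp_apply] at this ⊢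
    nlinarith
  · rw [repr_eq_zero_of_mem_span _ _ hv hj]; simp

include hσ hw in
lemma ev_le_of_subspace (i : Fin p) (W : Submodule ℝ (EuclideanSpace ℝ (Fin p))) (c : ℝ)
    (hdim : p ≤ finrank ℝ W + (i : ℕ))
    (hq : ∀ v ∈ W, ⟪v, Matrix.toEuclideanLin M v⟫ ≤ c * ‖v‖^2) : w i ≤ c := by
  obtain ⟨v, hv0, hvU, hvW⟩ := exists_ne_zero_mem_inf
    (Submodule.span ℝ (obasis hM σ '' ↑(Finset.Iic i))) W (by
      rw [finrank_span_obasis, Fin.card_Iic]; omega)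
  have h1 := quad_ge_on_top hM hσ hw hvU
  have h2 := hq v hvW
  have h3 : (0:ℝ) < ‖v‖^2 := pow_pos (norm_pos_iff.mpr hv0) 2
  nlinarith

include hσ hw in
lemma le_ev_of_subspace (i : Fin p) (W : Submodule ℝ (EuclideanSpace ℝ (Fin p))) (c : ℝ)
    (hdim : (i : ℕ) < finrank ℝ W)
    (hq : ∀ v ∈ W, c * ‖v‖^2 ≤ ⟪v, Matrix.toEuclideanLin M v⟫) : c ≤ w i := by
  obtain ⟨v, hv0, hvU, hvW⟩ := exists_ne_zero_mem_inf
    (Submodule.span ℝ (obasis hM σ '' ↑(Finset.Ici i))) W (by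
      rw [finrank_span_obasis, Fin.card_Ici]; omega)
  have h1 := quad_le_on_bot hM hσ hw hvU
  have h2 := hq v hvW
  have h3 : (0:ℝ) < ‖v‖^2 := pow_pos (norm_pos_iff.mpr hv0) 2
  nlinarith

end CF

lemma quad_perturb (A B : Matrix (Fin p) (Fin p) ℝ) (v : EuclideanSpace ℝ (Fin p)) :
    |⟪v, Matrix.toEuclideanLin A v⟫ - ⟪v, Matrix.toEuclideanLin B v⟫|
      ≤ ‖Matrix.toEuclideanCLM (𝕜 := ℝ) (A - B)‖ * ‖v‖^2 := by
  have h1 : Matrix.toEuclideanLin (A - B) v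
      = Matrix.toEuclideanLin A v - Matrix.toEuclideanLin B v := by
    rw [map_sub]; rfl
  have h2 : Matrix.toEuclideanLin (A - B) v
      = Matrix.toEuclideanCLM (𝕜 := ℝ) (A - B) v := by
    rw [← Matrix.coe_toEuclideanCLM_eq_toEuclideanLin]; rfl
  have h3 : ⟪v, Matrix.toEuclideanLin A v⟫ - ⟪v, Matrix.toEuclideanLin B v⟫
      = ⟪v, Matrix.toEuclideanCLM (𝕜 := ℝ) (A - B) v⟫ := by
    rw [← h2, h1, inner_sub_right]
  rw [h3]
  calc |⟪v, Matrix.toEuclideanCLM (𝕜 := ℝ) (A - B) v⟫|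
      ≤ ‖v‖ * ‖Matrix.toEuclideanCLM (𝕜 := ℝ) (A - B) v‖ := abs_real_inner_le_norm _ _
    _ ≤ ‖v‖ * (‖Matrix.toEuclideanCLM (𝕜 := ℝ) (A - B)‖ * ‖v‖) := by
        gcongr; exact (Matrix.toEuclideanCLM (𝕜 := ℝ) (A - B)).le_opNorm v
    _ = ‖Matrix.toEuclideanCLM (𝕜 := ℝ) (A - B)‖ * ‖v‖^2 := by ring

/-- Weyl's inequality for sorted eigenvalues. -/
lemma weyl {A B : Matrix (Fin p) (Fin p) ℝ} (hA : A.IsHermitian) (hB : B.IsHermitian)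
    {wA wB : Fin p → ℝ} {σA σB : Equiv.Perm (Fin p)}
    (hσA : wA = hA.eigenvalues ∘ σA) (hwA : Antitone wA)
    (hσB : wB = hB.eigenvalues ∘ σB) (hwB : Antitone wB) (i : Fin p) :
    |wA i - wB i| ≤ ‖Matrix.toEuclideanCLM (𝕜 := ℝ) (A - B)‖ := by
  set δ := ‖Matrix.toEuclideanCLM (𝕜 := ℝ) (A - B)‖ with hδ
  rw [abs_sub_le_iff]
  constructor
  · -- wA i ≤ wB i + δ
    have := ev_le_of_subspace hA hσA hwA i
      (Submodule.span ℝ (obasis hB σB '' ↑(Finset.Ici i))) (wB i + δ)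
      (by rw [finrank_span_obasis, Fin.card_Ici]; omega)
      (fun v hv => by
        have h1 := quad_le_on_bot hB hσB hwB hv
        have h2 := quad_perturb A B v
        have h3 : (0:ℝ) ≤ ‖v‖^2 := sq_nonneg _
        rw [abs_sub_le_iff] at h2
        nlinarith [h2.1])
    linarith
  · -- wB i ≤ wA i + δ  (i.e. wB i - wA i ≤ δ)
    have := le_ev_of_subspace hA hσA hwA i
      (Submodule.span ℝ (obasis hB σB '' ↑(Finset.Iic i))) (wB i - δ)
      (by rw [finrank_span_obasis, Fin.card_Iic]; omega)
      (fun v hv => by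
        have h1 := quad_ge_on_top hB hσB hwB hv
        have h2 := quad_perturb A B v
        have h3 : (0:ℝ) ≤ ‖v‖^2 := sq_nonneg _
        rw [abs_sub_le_iff] at h2
        nlinarith [h2.2])
    linarith

/-- Support structure of sorted eigenvalues of a PSD matrix of rank `d`. -/
lemma ev_support {M : Matrix (Fin p) (Fin p) ℝ} (hM : M.PosSemidef) {d : ℕ}
    (hrank : M.rank = d) {w : Fin p → ℝ} {σ : Equiv.Perm (Fin p)}
    (hσ : w = hM.1.eigenvalues ∘ σ) (hw : Antitone w) :
    (∀ i : Fin p, (i : ℕ) < d → 0 < w i) ∧ (∀ i : Fin p, d ≤ (i : ℕ) → w i = 0) := by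
  classical
  have hnn : ∀ i, 0 ≤ w i := fun i => by rw [hσ]; exact hM.eigenvalues_nonneg (σ i)
  have hcard : (Finset.univ.filter (fun j : Fin p => w j ≠ 0)).card = d := by
    have h1 := hM.1.rank_eq_card_non_zero_eigs
    rw [hrank] at h1
    have e : {j : Fin p // w j ≠ 0} ≃ {i : Fin p // hM.1.eigenvalues i ≠ 0} :=
      Equiv.subtypeEquiv σ (fun j => by rw [hσ]; simp)
    rw [← Fintype.card_subtype, Fintype.card_congr e]
    exact h1.symm
  have hzero : ∀ i : Fin p, d ≤ (i : ℕ) → w i = 0 := by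
    intro i hi
    by_contra h0
    have hsub : Finset.Iic i ⊆ Finset.univ.filter (fun j : Fin p => w j ≠ 0) := by
      intro k hk
      simp only [Finset.mem_filter, Finset.mem_univ, true_and]
      have : w i ≤ w k := hw (Finset.mem_Iic.mp hk)
      have hpos : 0 < w i := lt_of_le_of_ne (hnn i) (Ne.symm h0)
      exact fun hz => by rw [hz] at this; linarith
    have := Finset.card_le_card hsub
    rw [Fin.card_Iic, hcard] at this
    omega
  refine ⟨?_, hzero⟩
  intro i hi
  rcases (hnn i).lt_or_eq with h | h
  · exact h
  · exfalso
    have h0 : (0:ℝ) = w i := h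
    have hsub : Finset.univ.filter (fun j : Fin p => w j ≠ 0) ⊆ Finset.Iio i := by
      intro k hk
      simp only [Finset.mem_filter, Finset.mem_univ, true_and] at hk
      rw [Finset.mem_Iio]
      by_contra hik
      push_neg at hik
      have : w k ≤ w i := hw hik
      rw [← h0] at this
      exact hk (le_antisymm this (hnn k))
    have := Finset.card_le_card hsub
    rw [Fin.card_Iio, hcard] at this
    omega

/-- Deterministic core: under smallness conditions on `‖M̂ - M₀‖` and `c`,
the penalized criterion is uniquely maximized at `d`. -/
lemma det_key {p d : ℕ} (hdp : d ≤ p) {M₀ Mh : Matrix (Fin p) (Fin p) ℝ}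
    (hM₀ : M₀.PosSemidef) (hrank : M₀.rank = d) (hMh : Mh.PosSemidef)
    (ev : Matrix (Fin p) (Fin p) ℝ → Fin p → ℝ)
    (hev : ∀ (M : Matrix (Fin p) (Fin p) ℝ) (hM : M.IsHermitian),
      Antitone (ev M) ∧ ∃ σ : Equiv.Perm (Fin p), ev M = hM.eigenvalues ∘ σ)
    (c₂ : ℕ → ℝ) (hc₂ : StrictMono c₂)
    (lmin : ℝ) (hlmin : ∀ i : Fin p, (i : ℕ) < d → lmin ≤ ev M₀ i) (hlmin0 : 0 < lmin)
    (c : ℝ) (hc : 0 < c)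
    (hδ1 : ‖Matrix.toEuclideanCLM (𝕜 := ℝ) (Mh - M₀)‖ ≤ lmin / 2)
    (hc1 : c * (c₂ d - c₂ 0) < lmin / 2)
    (hδ2 : d < p → (p : ℝ) * ‖Matrix.toEuclideanCLM (𝕜 := ℝ) (Mh - M₀)‖
      < c * (c₂ (d + 1) - c₂ d))
    (k : ℕ) (hk : k ≤ p) (hkd : k ≠ d) :
    (∑ i : Fin p, if (i : ℕ) < k then ev Mh i else 0) - c * c₂ k
      < (∑ i : Fin p, if (i : ℕ) < d then ev Mh i else 0) - c * c₂ d := by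
  classical
  set δ := ‖Matrix.toEuclideanCLM (𝕜 := ℝ) (Mh - M₀)‖ with hδdef
  have hδ0 : 0 ≤ δ := norm_nonneg _
  obtain ⟨hwh, σh, hσh⟩ := hev Mh hMh.1
  obtain ⟨hw0, σ₀, hσ₀⟩ := hev M₀ hM₀.1
  obtain ⟨hpos0, hzero0⟩ := ev_support hM₀ hrank hσ₀ hw0
  have hweyl : ∀ i : Fin p, |ev Mh i - ev M₀ i| ≤ δ :=
    fun i => weyl hMh.1 hM₀.1 hσh hwh hσ₀ hw0 i
  have F1 : ∀ i : Fin p, d ≤ (i : ℕ) → ev Mh i ≤ δ := by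
    intro i hi
    have h1 := (abs_sub_le_iff.mp (hweyl i)).1
    have h2 := hzero0 i hi
    linarith
  have F2 : ∀ i : Fin p, (i : ℕ) < d → lmin / 2 ≤ ev Mh i := by
    intro i hi
    have h1 := (abs_sub_le_iff.mp (hweyl i)).2
    have h2 := hlmin i hi
    linarith
  have hsplit : ∀ a b : ℕ, a ≤ b →
      (∑ i : Fin p, if (i : ℕ) < b then ev Mh i else 0)
      = (∑ i : Fin p, if (i : ℕ) < a then ev Mh i else 0)
        + ∑ i ∈ Finset.univ.filter (fun i : Fin p => a ≤ (i : ℕ) ∧ (i : ℕ) < b), ev Mh i := by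
    intro a b hab
    rw [← Finset.sum_filter, ← Finset.sum_filter,
      ← Finset.sum_filter_add_sum_filter_not
        (Finset.univ.filter fun i : Fin p => (i : ℕ) < b) (fun i => (i : ℕ) < a)]
    congr 1
    · apply Finset.sum_congr _ (fun _ _ => rfl)
      ext i
      simp only [Finset.mem_filter, Finset.mem_univ, true_and]
      omega
    · apply Finset.sum_congr _ (fun _ _ => rfl)
      ext i
      simp only [Finset.mem_filter, Finset.mem_univ, true_and]
      omega
  rcases lt_or_gt_of_ne hkd with hlt | hgt
  · -- k < d
    rw [hsplit k d hlt.le]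
    set T := ∑ i ∈ Finset.univ.filter (fun i : Fin p => k ≤ (i : ℕ) ∧ (i : ℕ) < d), ev Mh i
    have hi0 : (⟨k, lt_of_lt_of_le hlt hdp⟩ : Fin p)
        ∈ Finset.univ.filter (fun i : Fin p => k ≤ (i : ℕ) ∧ (i : ℕ) < d) := by
      simp [hlt]
    have hT : lmin / 2 ≤ T := by
      refine le_trans (F2 (⟨k, lt_of_lt_of_le hlt hdp⟩ : Fin p) hlt) ?_
      exact Finset.single_le_sum (fun i hi => by
        have := (Finset.mem_filter.mp hi).2
        have := F2 i this.2
        linarith) hi0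
    have hmul : c * (c₂ d - c₂ k) ≤ c * (c₂ d - c₂ 0) :=
      mul_le_mul_of_nonneg_left (by
        have := hc₂.monotone (Nat.zero_le k); linarith) hc.le
    linarith
  · -- k > d
    rw [hsplit d k hgt.le]
    set T := ∑ i ∈ Finset.univ.filter (fun i : Fin p => d ≤ (i : ℕ) ∧ (i : ℕ) < k), ev Mh i
    have hdp' : d < p := lt_of_lt_of_le hgt hk
    have hT : T ≤ (p : ℝ) * δ := by
      calc T ≤ (Finset.univ.filter (fun i : Fin p => d ≤ (i : ℕ) ∧ (i : ℕ) < k)).card • δ :=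
            Finset.sum_le_card_nsmul _ _ _ (fun i hi =>
              F1 i (Finset.mem_filter.mp hi).2.1)
        _ = ((Finset.univ.filter (fun i : Fin p => d ≤ (i : ℕ) ∧ (i : ℕ) < k)).card : ℝ) * δ :=
            nsmul_eq_mul _ _
        _ ≤ (p : ℝ) * δ := by
            apply mul_le_mul_of_nonneg_right _ hδ0
            have := Finset.card_le_univ
              (Finset.univ.filter (fun i : Fin p => d ≤ (i : ℕ) ∧ (i : ℕ) < k))
            have h2 : #(Finset.univ.filter (fun i : Fin p => d ≤ (i : ℕ) ∧ (i : ℕ) < k)) ≤ p := by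
              simpa using this
            exact_mod_cast h2
    have hmul : c * (c₂ (d + 1) - c₂ d) ≤ c * (c₂ k - c₂ d) :=
      mul_le_mul_of_nonneg_left (by
        have := hc₂.monotone (show d + 1 ≤ k from hgt); linarith) hc.le
    have := hδ2 hdp'
    linarith

open MeasureTheory Filter
open scoped ENNReal

/-- Theorem 8 (consistency of the BIC-type order-determination criterion):
if `√n(M̂ₙ − M₀) = O_P(1)`, `rank M₀ = d`, `c₁(n) > 0` a.s., `c₁(n) → 0` in
probability, `√n c₁(n) → ∞` in probability, and `c₂` is increasing, then the
maximizer `d̂` of `Gₙ(k) = ∑_{i≤k} λᵢ(M̂ₙ) − c₁(n)c₂(k)` over `k ∈ {0,…,p}`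
satisfies `P(d̂ = d) → 1`. Here `ev M` enumerates the eigenvalues of a symmetric
matrix `M` in decreasing order. -/
theorem bic_order_determination_consistent {Ω : Type*} [MeasurableSpace Ω]
    (μ : Measure Ω) [IsProbabilityMeasure μ]
    (p d : ℕ) (hdp : d ≤ p)
    (Mhat : ℕ → Ω → Matrix (Fin p) (Fin p) ℝ) (M₀ : Matrix (Fin p) (Fin p) ℝ)
    (hM₀ : M₀.PosSemidef) (hrank : M₀.rank = d)
    (hMhat : ∀ n ω, (Mhat n ω).PosSemidef)
    (hOP : ∀ ε : ℝ, 0 < ε → ∃ C : ℝ, ∀ᶠ n : ℕ in atTop,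
      (μ {ω | C ≤ Real.sqrt (n : ℝ) *
        ‖Matrix.toEuclideanCLM (𝕜 := ℝ) (Mhat n ω - M₀)‖}).toReal ≤ ε)
    (ev : Matrix (Fin p) (Fin p) ℝ → Fin p → ℝ)
    (hev : ∀ (M : Matrix (Fin p) (Fin p) ℝ) (hM : M.IsHermitian),
      Antitone (ev M) ∧ ∃ σ : Equiv.Perm (Fin p), ev M = hM.eigenvalues ∘ σ)
    (c₁ : ℕ → Ω → ℝ) (hc₁pos : ∀ n, ∀ᵐ ω ∂μ, 0 < c₁ n ω)
    (hc₁zero : ∀ ε : ℝ, 0 < ε →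
      Tendsto (fun n => (μ {ω | ε ≤ |c₁ n ω|}).toReal) atTop (nhds 0))
    (hc₁inf : ∀ K : ℝ,
      Tendsto (fun n : ℕ => (μ {ω | K < Real.sqrt (n : ℝ) * c₁ n ω}).toReal) atTop (nhds 1))
    (c₂ : ℕ → ℝ) (hc₂ : StrictMono c₂)
    (G : ℕ → Ω → ℕ → ℝ)
    (hG : ∀ n ω kk, G n ω kk =
      (∑ i : Fin p, if (i : ℕ) < kk then ev (Mhat n ω) i else 0) - c₁ n ω * c₂ kk)
    (dhat : ℕ → Ω → ℕ)
    (hdhat : ∀ n ω, dhat n ω ≤ p ∧ ∀ kk ≤ p, G n ω kk ≤ G n ω (dhat n ω)) :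
    Tendsto (fun n => (μ {ω | dhat n ω = d}).toReal) atTop (nhds 1) := by
  classical
  -- the smallest positive eigenvalue of M₀
  obtain ⟨hw0anti, σ₀, hσ₀⟩ := hev M₀ hM₀.1
  obtain ⟨hpos0, hzero0⟩ := ev_support hM₀ hrank hσ₀ hw0anti
  have hlmin_ex : ∃ lmin : ℝ, 0 < lmin ∧ ∀ i : Fin p, (i : ℕ) < d → lmin ≤ ev M₀ i := by
    by_cases hd : 0 < d
    · have hd1 : d - 1 < p := by omega
      refine ⟨ev M₀ ⟨d - 1, hd1⟩, hpos0 _ (by simp; omega), fun i hi => ?_⟩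
      exact hw0anti (by rw [Fin.le_def]; simp; omega)
    · exact ⟨1, one_pos, fun i hi => absurd hi (by omega)⟩
  obtain ⟨lmin, hlmin0, hlmin⟩ := hlmin_ex
  -- constants
  obtain ⟨B, hBdef⟩ : ∃ B : ℝ, B = c₂ d - c₂ 0 := ⟨_, rfl⟩
  have hB : 0 ≤ B := by rw [hBdef]; exact sub_nonneg.mpr (hc₂.monotone (Nat.zero_le d))
  obtain ⟨εc, hεcdef⟩ : ∃ e : ℝ, e = lmin / (2 * (B + 1)) := ⟨_, rfl⟩
  have hεc : 0 < εc := by rw [hεcdef]; positivity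
  obtain ⟨β, hβdef⟩ : ∃ b : ℝ, b = if d < p then c₂ (d + 1) - c₂ d else 1 := ⟨_, rfl⟩
  have hβ : 0 < β := by
    rw [hβdef]; split
    · exact sub_pos.mpr (hc₂ (lt_add_one d))
    · exact one_pos
  rw [Metric.tendsto_atTop]
  intro ε hε
  obtain ⟨C, hC⟩ := hOP (ε / 4) (by linarith)
  obtain ⟨K, hKdef⟩ : ∃ K : ℝ, K = max ((p : ℝ) * C / β) 0 + 1 := ⟨_, rfl⟩
  have hK0 : 0 < K := by rw [hKdef]; positivity
  have h1 : ∀ᶠ n : ℕ in atTop,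
      1 - ε / 4 < (μ {ω | K < Real.sqrt (n : ℝ) * c₁ n ω}).toReal :=
    (hc₁inf K).eventually (eventually_gt_nhds (by linarith))
  have h2 : ∀ᶠ n : ℕ in atTop, (μ {ω | εc ≤ |c₁ n ω|}).toReal < ε / 4 :=
    (hc₁zero εc hεc).eventually (eventually_lt_nhds (by linarith))
  -- eventually √n is large
  obtain ⟨t, htdef⟩ : ∃ t : ℝ, t = max (2 * C / lmin) 0 := ⟨_, rfl⟩
  have ht0 : 0 ≤ t := htdef ▸ le_max_right _ _
  have h4 : ∀ᶠ n : ℕ in atTop, C ≤ Real.sqrt (n : ℝ) * (lmin / 2)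
      ∧ (1 : ℝ) ≤ Real.sqrt (n : ℝ) := by
    rw [eventually_atTop]
    refine ⟨max 1 ⌈t ^ 2⌉₊, fun n hn => ?_⟩
    have hn1 : (1 : ℕ) ≤ n := le_trans (le_max_left _ _) hn
    have hn2 : (⌈t ^ 2⌉₊ : ℝ) ≤ (n : ℝ) := by
      exact_mod_cast le_trans (le_max_right _ _) hn
    have ht2 : t ^ 2 ≤ (n : ℝ) := le_trans (Nat.le_ceil _) hn2
    have hsq : t ≤ Real.sqrt (n : ℝ) := by
      calc t = Real.sqrt (t ^ 2) := (Real.sqrt_sq ht0).symm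
        _ ≤ Real.sqrt (n : ℝ) := Real.sqrt_le_sqrt ht2
    have hsq1 : (1 : ℝ) ≤ Real.sqrt (n : ℝ) := by
      calc (1 : ℝ) = Real.sqrt 1 := Real.sqrt_one.symm
        _ ≤ Real.sqrt (n : ℝ) := Real.sqrt_le_sqrt (by exact_mod_cast hn1)
    refine ⟨?_, hsq1⟩
    have htC : 2 * C / lmin ≤ t := htdef ▸ le_max_left _ _
    have : 2 * C / lmin ≤ Real.sqrt (n : ℝ) := le_trans htC hsq
    rw [div_le_iff₀ hlmin0] at this
    linarith
  have hcomb := (h1.and (h2.and (hC.and h4)))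
  rw [eventually_atTop] at hcomb
  obtain ⟨N, hN⟩ := hcomb
  refine ⟨N, fun n hn => ?_⟩
  obtain ⟨hn1, hn2, hn3, hn4, hn5⟩ := hN n hn
  -- events
  set Bev : Set Ω := {ω | K < Real.sqrt (n : ℝ) * c₁ n ω} with hBevdef
  set Abad : Set Ω := {ω | C ≤ Real.sqrt (n : ℝ) *
    ‖Matrix.toEuclideanCLM (𝕜 := ℝ) (Mhat n ω - M₀)‖} with hAdef
  set Cbad : Set Ω := {ω | εc ≤ |c₁ n ω|} with hCdef
  set D : Set Ω := {ω | dhat n ω = d} with hDdef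
  have hsn : (0 : ℝ) < Real.sqrt (n : ℝ) := lt_of_lt_of_le one_pos hn5
  have hsub : Bev ⊆ D ∪ Abad ∪ Cbad := by
    intro ω hω
    by_cases hA : ω ∈ Abad
    · exact Or.inl (Or.inr hA)
    by_cases hCb : ω ∈ Cbad
    · exact Or.inr hCb
    left; left
    -- extract numeric facts
    have hωB : K < Real.sqrt (n : ℝ) * c₁ n ω := hω
    have hωA : Real.sqrt (n : ℝ) *
        ‖Matrix.toEuclideanCLM (𝕜 := ℝ) (Mhat n ω - M₀)‖ < C := lt_of_not_ge hA
    have hωC : |c₁ n ω| < εc := lt_of_not_ge hCb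
    obtain ⟨c, hcdef⟩ : ∃ c : ℝ, c = c₁ n ω := ⟨_, rfl⟩
    rw [← hcdef] at hωB hωC
    obtain ⟨δ, hδdef⟩ : ∃ x : ℝ, x = ‖Matrix.toEuclideanCLM (𝕜 := ℝ) (Mhat n ω - M₀)‖ := ⟨_, rfl⟩
    rw [← hδdef] at hωA
    have hδ0 : 0 ≤ δ := hδdef ▸ norm_nonneg _
    have hcpos : 0 < c := by
      by_contra h
      push_neg at h
      have : Real.sqrt (n : ℝ) * c ≤ 0 := mul_nonpos_of_nonneg_of_nonpos hsn.le h
      linarith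
    have hδ1 : δ ≤ lmin / 2 := by
      have h' : Real.sqrt (n : ℝ) * δ < Real.sqrt (n : ℝ) * (lmin / 2) :=
        lt_of_lt_of_le hωA hn4
      exact le_of_lt ((mul_lt_mul_iff_right₀ hsn).mp h')
    have hc1 : c * (c₂ d - c₂ 0) < lmin / 2 := by
      have hclt : c < εc := lt_of_le_of_lt (le_abs_self c) hωC
      have h1' : c * B ≤ c * (B + 1) := by nlinarith
      have h2' : c * (B + 1) < εc * (B + 1) := by
        apply mul_lt_mul_of_pos_right hclt; linarith
      have h3' : εc * (B + 1) = lmin / 2 := by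
        rw [hεcdef]
        have hB1 : (0:ℝ) < B + 1 := by linarith
        field_simp
      rw [← hBdef]
      linarith
    have hδ2 : d < p → (p : ℝ) * δ < c * (c₂ (d + 1) - c₂ d) := by
      intro hdp'
      have hβ' : β = c₂ (d + 1) - c₂ d := by rw [hβdef, if_pos hdp']
      have hKβ : (p : ℝ) * C / β < K := by
        rw [hKdef]
        have h := le_max_left ((p : ℝ) * C / β) 0
        linarith
      have h1' : (p : ℝ) * C / β < Real.sqrt (n : ℝ) * c := lt_trans hKβ hωB
      have h2' : (p : ℝ) * C < Real.sqrt (n : ℝ) * c * β := by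
        rw [div_lt_iff₀ hβ] at h1'; linarith
      have h3' : (p : ℝ) * (Real.sqrt (n : ℝ) * δ) ≤ (p : ℝ) * C :=
        mul_le_mul_of_nonneg_left hωA.le (by positivity)
      have h4' : Real.sqrt (n : ℝ) * ((p : ℝ) * δ) < Real.sqrt (n : ℝ) * (c * β) := by
        nlinarith
      have := (mul_lt_mul_iff_right₀ hsn).mp h4'
      rw [hβ'] at this; linarith
    -- apply deterministic lemma
    have hdet : ∀ k ≤ p, k ≠ d → G n ω k < G n ω d := by
      intro k hk hkd
      rw [hG n ω k, hG n ω d, ← hcdef]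
      exact det_key hdp hM₀ hrank (hMhat n ω) ev hev c₂ hc₂ lmin hlmin hlmin0
        c hcpos (hδdef ▸ hδ1) hc1 (hδdef ▸ hδ2) k hk hkd
    show dhat n ω = d
    by_contra hne
    have h5 := (hdhat n ω).2 d hdp
    have h6 := hdet (dhat n ω) (hdhat n ω).1 hne
    linarith
  -- measure arithmetic
  have hle : μ Bev ≤ μ D + μ Abad + μ Cbad := by
    refine le_trans (measure_mono hsub) ?_
    refine le_trans (measure_union_le _ _) ?_
    exact add_le_add_left (measure_union_le _ _) _
  have hfin : ∀ s : Set Ω, μ s ≠ ⊤ := fun s => measure_ne_top μ s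
  have htr : (μ Bev).toReal ≤ (μ D).toReal + (μ Abad).toReal + (μ Cbad).toReal := by
    calc (μ Bev).toReal ≤ (μ D + μ Abad + μ Cbad).toReal := by
          apply ENNReal.toReal_mono _ hle
          exact ENNReal.add_ne_top.mpr ⟨ENNReal.add_ne_top.mpr ⟨hfin _, hfin _⟩, hfin _⟩
      _ = (μ D).toReal + (μ Abad).toReal + (μ Cbad).toReal := by
          rw [ENNReal.toReal_add (ENNReal.add_ne_top.mpr ⟨hfin _, hfin _⟩) (hfin _),
            ENNReal.toReal_add (hfin _) (hfin _)]
  have hD1 : (μ D).toReal ≤ 1 := by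
    have := prob_le_one (μ := μ) (s := D)
    calc (μ D).toReal ≤ (1 : ℝ≥0∞).toReal := ENNReal.toReal_mono ENNReal.one_ne_top this
      _ = 1 := ENNReal.toReal_one
  rw [Real.dist_eq, abs_sub_lt_iff]
  constructor
  · linarith
  · linarith [htr, hn1, hn2, hn3]
end
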